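/- Let X be a real random variable that is unimodal and symmetric about its mean μ ≠ 0, with variance at most σ². Define S = |μ|/σ. Then P[sign(X) ≠ sign(μ)] ≤ (2/9)·(1/S²) if S > 2/√3, and P[sign(X) ≠ sign(μ)] ≤ 1/2 − S/(2√3) otherwise; in either case the bound is less than 1/2. -/

import Mathlib

open MeasureTheory ProbabilityTheory

/-- A real distribution is unimodal with mode `m` if it has a density (w.r.t. Lebesgue
measure) which is nondecreasing on `(-∞, m]` and nonincreasing on `[m, ∞)`. -/
def IsUnimodalWithMode (ν : Measure ℝ) (m : ℝ) : Prop :=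
  ∃ ρ : ℝ → ℝ, (∀ x, 0 ≤ ρ x) ∧ Measurable ρ ∧
    ν = volume.withDensity (fun x => ENNReal.ofReal (ρ x)) ∧
    MonotoneOn ρ (Set.Iic m) ∧ AntitoneOn ρ (Set.Ici m)

open scoped ENNReal NNReal

section GaussAux


lemma key_nonneg (g u : ℝ → ℝ)
    (hg : Measurable g) (hg0 : ∀ x, 0 ≤ g x) (hga : AntitoneOn g (Set.Ici 0))
    (hgi : IntegrableOn g (Set.Ioi 0))
    (hu : Measurable u)
    (hui : IntegrableOn (fun x => |u x| * g x) (Set.Ioi 0))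
    (hU : ∀ a : ℝ, 0 < a → 0 ≤ ∫ x in Set.Ioc 0 a, u x) :
    0 ≤ ∫ x in Set.Ioi 0, u x * g x := by
  set s : Set ℝ := Set.Ioi (0:ℝ) with hs
  set F : ℝ → ℝ → ℝ := fun x t => Set.indicator (Set.Ioo 0 (g x)) (fun _ => u x) t with hF
  have hFm : AEStronglyMeasurable (Function.uncurry F) ((volume.restrict s).prod volume) := by
    have hset : MeasurableSet {p : ℝ × ℝ | 0 < p.2 ∧ p.2 < g p.1} := by
      apply MeasurableSet.inter
      · exact measurable_snd measurableSet_Ioi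
      · exact measurableSet_lt measurable_snd (hg.comp measurable_fst)
    have : Function.uncurry F = Set.indicator {p : ℝ × ℝ | 0 < p.2 ∧ p.2 < g p.1}
        (fun p => u p.1) := by
      ext p
      simp only [Function.uncurry, hF, Set.indicator, Set.mem_Ioo, Set.mem_setOf_eq]
    rw [this]
    exact ((hu.comp measurable_fst).indicator hset).aestronglyMeasurable
  have hnorm : ∀ x, (∫ t, ‖F x t‖) = |u x| * g x := by
    intro x
    have : (fun t => ‖F x t‖) = Set.indicator (Set.Ioo 0 (g x)) (fun _ => |u x|) := by
      ext t; simp [hF, Set.indicator]; split <;> simp [abs_of_nonneg]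
    rw [this, integral_indicator measurableSet_Ioo]
    simp [Real.volume_Ioo, ENNReal.toReal_ofReal (hg0 x)]
    rw [max_eq_left (hg0 x)]
    ring
  have hval : ∀ x, (∫ t, F x t) = u x * g x := by
    intro x
    rw [hF]
    rw [integral_indicator_const _ measurableSet_Ioo]
    simp [Real.volume_Ioo, ENNReal.toReal_ofReal (hg0 x)]
    rw [max_eq_left (hg0 x)]
    ring
  have hFi : Integrable (Function.uncurry F) ((volume.restrict s).prod volume) := by
    rw [integrable_prod_iff hFm]
    constructor
    · refine Filter.Eventually.of_forall (fun x => ?_)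
      have : IntegrableOn (fun _ : ℝ => u x) (Set.Ioo 0 (g x)) volume :=
        integrableOn_const (by simp [Real.volume_Ioo])
      exact this.integrable_indicator measurableSet_Ioo
    · apply Integrable.congr hui
      refine Filter.Eventually.of_forall (fun x => ?_)
      exact (hnorm x).symm
  have hswap := integral_integral_swap hFi
  have hL : (∫ x in s, ∫ t, F x t) = ∫ x in s, u x * g x :=
    integral_congr_ae (Filter.Eventually.of_forall fun x => hval x)
  rw [hL] at hswap
  rw [hswap]
  apply integral_nonneg
  intro t
  show (0:ℝ) ≤ ∫ x in s, F x t
  by_cases ht : 0 < t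
  · -- inner integral is over E_t
    have hEm : MeasurableSet {x : ℝ | t < g x} := measurableSet_lt measurable_const hg
    have h1 : (fun x => F x t) = Set.indicator {x : ℝ | t < g x} u := by
      ext x
      simp only [hF, Set.indicator, Set.mem_Ioo, Set.mem_setOf_eq]
      by_cases h : t < g x <;> simp [h, ht]
    have h2 : (∫ x in s, F x t) = ∫ x in s ∩ {x : ℝ | t < g x}, u x := by
      rw [h1, integral_indicator hEm, Measure.restrict_restrict hEm, Set.inter_comm]
    rw [h2]
    set B := s ∩ {x : ℝ | t < g x} with hB
    -- B bounded above
    have hbdd : BddAbove B := by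
      by_contra hnb
      have hgt : ∀ x ∈ s, t < g x := by
        intro x hx
        obtain ⟨y, hyB, hxy⟩ := not_bddAbove_iff.mp hnb x
        exact lt_of_lt_of_le hyB.2 (hga (Set.mem_Ici.mpr (le_of_lt hx)) (Set.mem_Ici.mpr (le_of_lt hyB.1)) hxy.le)
      have : IntegrableOn (fun _ : ℝ => t) s volume := by
        apply Integrable.mono hgi (aestronglyMeasurable_const)
        refine (ae_restrict_iff' measurableSet_Ioi).mpr (Filter.Eventually.of_forall fun x hx => ?_)
        rw [Real.norm_eq_abs, Real.norm_eq_abs, abs_of_pos ht, abs_of_nonneg (hg0 x)]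
        exact (hgt x hx).le
      rw [integrableOn_const_iff (C := t)] at this
      rcases this with h | h
      · exact absurd (enorm_eq_zero.mp h) (ne_of_gt ht)
      · simp [hs, Real.volume_Ioi] at h
    rcases Set.eq_empty_or_nonempty B with hBe | hBne
    · simp [hBe]
    · set a := sSup B with ha
      have haB : ∀ x ∈ B, x ≤ a := fun x hx => le_csSup hbdd hx
      have ha0 : 0 < a := by
        obtain ⟨x, hx⟩ := hBne
        exact lt_of_lt_of_le hx.1 (haB x hx)
      have hsub1 : Set.Ioo 0 a ⊆ B := by
        intro x hx
        obtain ⟨y, hyB, hxy⟩ := exists_lt_of_lt_csSup hBne hx.2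
        exact ⟨hx.1, lt_of_lt_of_le hyB.2 (hga hx.1.le (Set.mem_Ici.mpr (le_of_lt hyB.1)) hxy.le)⟩
      have hsub2 : B ⊆ Set.Ioc 0 a := fun x hx => ⟨hx.1, haB x hx⟩
      have hae : B =ᵐ[volume] Set.Ioc 0 a := by
        rw [MeasureTheory.ae_eq_set]
        constructor
        · have he : B \ Set.Ioc 0 a = ∅ := by
            ext x
            simp only [Set.mem_diff, Set.mem_empty_iff_false, iff_false, not_and, not_not]
            exact fun h1 => hsub2 h1
          simp [he]
        · apply measure_mono_null (t := {a})
          · intro x hx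
            have h1 := hx.1
            by_contra hxa
            exact hx.2 (hsub1 ⟨h1.1, lt_of_le_of_ne h1.2 hxa⟩)
          · simp
      rw [setIntegral_congr_set hae]
      exact hU a ha0
  · have : ∀ x, F x t = 0 := by
      intro x
      have hni : t ∉ Set.Ioo 0 (g x) := fun h => ht h.1
      simp [hF, Set.indicator_of_notMem hni]
    simp [this]


lemma gauss_one {g : ℝ → ℝ} {k : ℝ} (hk : 0 < k) (hg : Measurable g) (hg0 : ∀ x, 0 ≤ g x)
    (hga : AntitoneOn g (Set.Ici 0)) (hgi : IntegrableOn g (Set.Ioi 0))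
    (hg2 : IntegrableOn (fun x => x ^ 2 * g x) (Set.Ioi 0)) :
    ∫ x in Set.Ioi k, g x ≤ 4 / (9 * k ^ 2) * ∫ x in Set.Ioi 0, x ^ 2 * g x := by
  set c : ℝ := 4 / (9 * k ^ 2) with hc
  have hc0 : 0 < c := by positivity
  set u : ℝ → ℝ := fun x => c * x ^ 2 - Set.indicator (Set.Ioi k) (fun _ => (1:ℝ)) x with hudef
  have hx2m : Measurable fun x : ℝ => x ^ 2 := measurable_id.pow_const 2
  have hu : Measurable u :=
    (measurable_const.mul hx2m).sub (measurable_const.indicator measurableSet_Ioi)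
  have hind_g : (fun x => Set.indicator (Set.Ioi k) (fun _ => (1:ℝ)) x * g x)
      = Set.indicator (Set.Ioi k) g := by
    ext x
    by_cases h : x ∈ Set.Ioi k <;>
      simp [Set.indicator_of_mem, Set.indicator_of_notMem, h]
  have hIind : IntegrableOn (Set.indicator (Set.Ioi k) g) (Set.Ioi 0) volume :=
    hgi.indicator measurableSet_Ioi
  have hui : IntegrableOn (fun x => |u x| * g x) (Set.Ioi 0) volume := by
    apply Integrable.mono'
      ((hg2.const_mul c).add hIind) ((hu.abs.mul hg).aestronglyMeasurable)
    refine Filter.Eventually.of_forall fun x => ?_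
    have h1 : |u x| ≤ c * x ^ 2 + Set.indicator (Set.Ioi k) (fun _ => (1:ℝ)) x := by
      refine (abs_sub _ _).trans ?_
      have h2 : |c * x ^ 2| = c * x ^ 2 := abs_of_nonneg (by positivity)
      have h3 : |Set.indicator (Set.Ioi k) (fun _ => (1:ℝ)) x|
          = Set.indicator (Set.Ioi k) (fun _ => (1:ℝ)) x := by
        apply abs_of_nonneg; exact Set.indicator_nonneg (fun _ _ => zero_le_one) x
      rw [h2, h3]
    simp only [Pi.mul_apply, Pi.add_apply]
    rw [Real.norm_eq_abs, abs_of_nonneg (mul_nonneg (abs_nonneg _) (hg0 x))]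
    calc |u x| * g x ≤ (c * x ^ 2 + Set.indicator (Set.Ioi k) (fun _ => (1:ℝ)) x) * g x :=
          mul_le_mul_of_nonneg_right h1 (hg0 x)
      _ = c * (x ^ 2 * g x) + Set.indicator (Set.Ioi k) g x := by
          rw [add_mul, ← congrFun hind_g x]; ring
  have hU : ∀ a : ℝ, 0 < a → 0 ≤ ∫ x in Set.Ioc 0 a, u x := by
    intro a ha
    have hint1 : IntegrableOn (fun x : ℝ => c * x ^ 2) (Set.Ioc 0 a) volume :=
      (continuous_const.mul (continuous_pow 2)).integrableOn_Ioc
    have hint2 : IntegrableOn (Set.indicator (Set.Ioi k) (fun _ => (1:ℝ))) (Set.Ioc 0 a)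
        volume := by
      exact (integrableOn_const measure_Ioc_lt_top.ne).indicator measurableSet_Ioi
    have hsplit : ∫ x in Set.Ioc 0 a, u x
        = (∫ x in Set.Ioc 0 a, c * x ^ 2)
          - ∫ x in Set.Ioc 0 a, Set.indicator (Set.Ioi k) (fun _ => (1:ℝ)) x :=
      integral_sub hint1 hint2
    have hsq : (∫ x in Set.Ioc 0 a, c * x ^ 2) = c * (a ^ 3 / 3) := by
      rw [integral_const_mul, ← intervalIntegral.integral_of_le ha.le,
        integral_pow]
      norm_num
    have hindval : (∫ x in Set.Ioc 0 a, Set.indicator (Set.Ioi k) (fun _ => (1:ℝ)) x)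
        = (volume (Set.Ioc 0 a ∩ Set.Ioi k)).toReal := by
      rw [setIntegral_indicator measurableSet_Ioi, setIntegral_const, measureReal_def, smul_eq_mul, mul_one]
    have hinter : Set.Ioc 0 a ∩ Set.Ioi k = Set.Ioc k a := by
      ext x
      constructor
      · rintro ⟨⟨_, h2⟩, h3⟩; exact ⟨h3, h2⟩
      · rintro ⟨h1, h2⟩; exact ⟨⟨lt_trans hk h1, h2⟩, h1⟩
    rw [hsplit, hsq, hindval, hinter]
    by_cases hak : a ≤ k
    · rw [Set.Ioc_eq_empty (by exact fun h => absurd hak (not_le.mpr h))]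
      simp only [measure_empty, ENNReal.toReal_zero, sub_zero]
      positivity
    · push_neg at hak
      rw [Real.volume_Ioc, ENNReal.toReal_ofReal (by linarith), sub_nonneg]
      have hrw2 : c * (a ^ 3 / 3) = 4 * a ^ 3 / (27 * k ^ 2) := by rw [hc]; ring
      rw [hrw2, le_div_iff₀ (by positivity)]
      nlinarith [mul_nonneg (sq_nonneg (2 * a - 3 * k)) (by linarith : (0:ℝ) ≤ a + 3 * k)]
  have hkey := key_nonneg g u hg hg0 hga hgi hu hui hU
  have hrw : (fun x => u x * g x)
      = fun x => c * (x ^ 2 * g x) - Set.indicator (Set.Ioi k) g x := by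
    ext x
    rw [hudef]
    simp only []
    rw [← congrFun hind_g x]
    ring
  rw [hrw] at hkey
  rw [integral_sub (hg2.const_mul c) hIind, integral_const_mul] at hkey
  have hindint : ∫ x in Set.Ioi 0, Set.indicator (Set.Ioi k) g x = ∫ x in Set.Ioi k, g x := by
    rw [setIntegral_indicator measurableSet_Ioi, Set.Ioi_inter_Ioi,
      sup_eq_right.mpr hk.le]
  rw [hindint] at hkey
  linarith

lemma gauss_two {g : ℝ → ℝ} {k σ : ℝ} (hk : 0 < k) (hσ : 0 < σ)
    (hkσ : k ≤ 2 * σ / Real.sqrt 3)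
    (hg : Measurable g) (hg0 : ∀ x, 0 ≤ g x)
    (hga : AntitoneOn g (Set.Ici 0)) (hgi : IntegrableOn g (Set.Ioi 0))
    (hg2 : IntegrableOn (fun x => x ^ 2 * g x) (Set.Ioi 0)) :
    Real.sqrt 3 * k / (2 * σ) * (∫ x in Set.Ioi 0, g x)
      - 3 * (Real.sqrt 3 * k / (18 * σ ^ 3)) * (∫ x in Set.Ioi 0, x ^ 2 * g x)
      ≤ ∫ x in Set.Ioc 0 k, g x := by
  set s : ℝ := Real.sqrt 3 with hsdef
  have hs2 : s ^ 2 = 3 := Real.sq_sqrt (by norm_num)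
  have hs0 : 0 < s := Real.sqrt_pos.mpr (by norm_num)
  set α : ℝ := s * k / (2 * σ) with hα
  set β : ℝ := s * k / (18 * σ ^ 3) with hβ
  have hα0 : 0 < α := by positivity
  have hβ0 : 0 < β := by positivity
  have hα1 : α ≤ 1 := by
    rw [hα, div_le_one (by positivity)]
    calc s * k ≤ s * (2 * σ / s) := by
          exact mul_le_mul_of_nonneg_left hkσ hs0.le
      _ = 2 * σ := by field_simp
  set u : ℝ → ℝ := fun x =>
    Set.indicator (Set.Ioc 0 k) (fun _ => (1:ℝ)) x - α + 3 * β * x ^ 2 with hudef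
  have hx2m : Measurable fun x : ℝ => x ^ 2 := measurable_id.pow_const 2
  have hu : Measurable u :=
    ((measurable_const.indicator measurableSet_Ioc).sub measurable_const).add
      (measurable_const.mul hx2m)
  have hind_g : (fun x => Set.indicator (Set.Ioc 0 k) (fun _ => (1:ℝ)) x * g x)
      = Set.indicator (Set.Ioc 0 k) g := by
    ext x
    by_cases h : x ∈ Set.Ioc 0 k <;>
      simp [Set.indicator_of_mem, Set.indicator_of_notMem, h]
  have hIind : IntegrableOn (Set.indicator (Set.Ioc 0 k) g) (Set.Ioi 0) volume :=
    hgi.indicator measurableSet_Ioc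
  have hui : IntegrableOn (fun x => |u x| * g x) (Set.Ioi 0) volume := by
    apply Integrable.mono'
      ((hIind.add (hgi.const_mul α)).add (hg2.const_mul (3 * β)))
      ((hu.abs.mul hg).aestronglyMeasurable)
    refine Filter.Eventually.of_forall fun x => ?_
    have hindb : |Set.indicator (Set.Ioc 0 k) (fun _ => (1:ℝ)) x|
        = Set.indicator (Set.Ioc 0 k) (fun _ => (1:ℝ)) x :=
      abs_of_nonneg (Set.indicator_nonneg (fun _ _ => zero_le_one) x)
    have h1 : |u x| ≤ Set.indicator (Set.Ioc 0 k) (fun _ => (1:ℝ)) x + α + 3 * β * x ^ 2 := by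
      calc |u x| ≤ |Set.indicator (Set.Ioc 0 k) (fun _ => (1:ℝ)) x - α| + |3 * β * x ^ 2| :=
            abs_add_le _ _
        _ ≤ |Set.indicator (Set.Ioc 0 k) (fun _ => (1:ℝ)) x| + |α| + |3 * β * x ^ 2| := by
            linarith [abs_sub (Set.indicator (Set.Ioc 0 k) (fun _ => (1:ℝ)) x) α]
        _ = Set.indicator (Set.Ioc 0 k) (fun _ => (1:ℝ)) x + α + 3 * β * x ^ 2 := by
            rw [hindb, abs_of_nonneg hα0.le, abs_of_nonneg (by positivity)]
    simp only [Pi.mul_apply, Pi.add_apply]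
    rw [Real.norm_eq_abs, abs_of_nonneg (mul_nonneg (abs_nonneg _) (hg0 x))]
    calc |u x| * g x
        ≤ (Set.indicator (Set.Ioc 0 k) (fun _ => (1:ℝ)) x + α + 3 * β * x ^ 2) * g x :=
          mul_le_mul_of_nonneg_right h1 (hg0 x)
      _ = Set.indicator (Set.Ioc 0 k) g x + α * g x + 3 * β * (x ^ 2 * g x) := by
          rw [add_mul, add_mul, ← congrFun hind_g x]; ring
  have hU : ∀ a : ℝ, 0 < a → 0 ≤ ∫ x in Set.Ioc 0 a, u x := by
    intro a ha
    have hint2 : IntegrableOn (fun x : ℝ => 3 * β * x ^ 2) (Set.Ioc 0 a) volume :=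
      (continuous_const.mul (continuous_pow 2)).integrableOn_Ioc
    have hint1 : IntegrableOn
        (fun x => Set.indicator (Set.Ioc 0 k) (fun _ => (1:ℝ)) x - α) (Set.Ioc 0 a) volume :=
      ((integrableOn_const measure_Ioc_lt_top.ne).indicator measurableSet_Ioc).sub
        (integrableOn_const measure_Ioc_lt_top.ne)
    have hsplit : ∫ x in Set.Ioc 0 a, u x
        = (∫ x in Set.Ioc 0 a, (Set.indicator (Set.Ioc 0 k) (fun _ => (1:ℝ)) x - α))
          + ∫ x in Set.Ioc 0 a, 3 * β * x ^ 2 := integral_add hint1 hint2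
    have hsplit2 : (∫ x in Set.Ioc 0 a, (Set.indicator (Set.Ioc 0 k) (fun _ => (1:ℝ)) x - α))
        = (∫ x in Set.Ioc 0 a, Set.indicator (Set.Ioc 0 k) (fun _ => (1:ℝ)) x)
          - ∫ x in Set.Ioc 0 a, (fun _ => α) x :=
      integral_sub
        ((integrableOn_const measure_Ioc_lt_top.ne).indicator measurableSet_Ioc)
        (integrableOn_const measure_Ioc_lt_top.ne)
    have hca : (∫ x in Set.Ioc 0 a, (fun _ => α) x) = α * a := by
      rw [setIntegral_const, measureReal_def, smul_eq_mul, Real.volume_Ioc,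
        ENNReal.toReal_ofReal (by linarith)]
      ring
    have hsq : (∫ x in Set.Ioc 0 a, 3 * β * x ^ 2) = β * a ^ 3 := by
      rw [integral_const_mul, ← intervalIntegral.integral_of_le ha.le, integral_pow]
      norm_num; ring
    have hindval : (∫ x in Set.Ioc 0 a, Set.indicator (Set.Ioc 0 k) (fun _ => (1:ℝ)) x)
        = min a k := by
      rw [setIntegral_indicator measurableSet_Ioc, setIntegral_const, measureReal_def, smul_eq_mul, mul_one,
        Set.Ioc_inter_Ioc, Real.volume_Ioc, ENNReal.toReal_ofReal]
      · rw [sup_idem]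
        norm_num
      · rw [sup_idem]
        simp only [sub_zero, le_inf_iff]
        exact ⟨ha.le, hk.le⟩
    rw [hsplit, hsplit2, hca, hsq, hindval]
    have hfact : 0 ≤ s * a ^ 3 - 9 * s * σ ^ 2 * a + 18 * σ ^ 3 := by
      have hid : s * ((a - s * σ) ^ 2 * (a + 2 * s * σ))
          = s * a ^ 3 - 9 * s * σ ^ 2 * a + 18 * σ ^ 3 := by
        linear_combination (2 * σ ^ 3 * (s ^ 2 + 3) - 3 * σ ^ 2 * a * s) * hs2
      rw [← hid]
      positivity
    by_cases hak : a ≤ k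
    · rw [min_eq_left hak]
      nlinarith [mul_nonneg (sub_nonneg.mpr hα1) ha.le, mul_nonneg hβ0.le (pow_nonneg ha.le 3)]
    · push_neg at hak
      rw [min_eq_right hak.le]
      have hkey : α * a - β * a ^ 3 ≤ k := by
        have hrwab : α * a - β * a ^ 3 = k / (18 * σ ^ 3) * (9 * s * σ ^ 2 * a - s * a ^ 3) := by
          rw [hα, hβ]; field_simp; ring
        rw [hrwab]
        calc k / (18 * σ ^ 3) * (9 * s * σ ^ 2 * a - s * a ^ 3)
            ≤ k / (18 * σ ^ 3) * (18 * σ ^ 3) := by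
              apply mul_le_mul_of_nonneg_left (by linarith) (by positivity)
          _ = k := by field_simp
      linarith
  have hkey := key_nonneg g u hg hg0 hga hgi hu hui hU
  have hrw : (fun x => u x * g x)
      = fun x => (Set.indicator (Set.Ioc 0 k) g x - α * g x) + 3 * β * (x ^ 2 * g x) := by
    ext x
    rw [hudef]
    simp only []
    rw [← congrFun hind_g x]
    ring
  rw [hrw] at hkey
  have hsplitI : ∫ x in Set.Ioi 0,
      (Set.indicator (Set.Ioc 0 k) g x - α * g x + 3 * β * (x ^ 2 * g x))
      = ((∫ x in Set.Ioi 0, Set.indicator (Set.Ioc 0 k) g x) - α * ∫ x in Set.Ioi 0, g x)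
        + 3 * β * ∫ x in Set.Ioi 0, x ^ 2 * g x := by
    rw [integral_add (f := fun x => Set.indicator (Set.Ioc 0 k) g x - α * g x)
        (g := fun x => 3 * β * (x ^ 2 * g x))
        (hIind.sub (hgi.const_mul α)) (hg2.const_mul (3 * β)),
      integral_sub hIind (hgi.const_mul α), integral_const_mul, integral_const_mul]
  rw [hsplitI] at hkey
  have hindint : ∫ x in Set.Ioi 0, Set.indicator (Set.Ioc 0 k) g x
      = ∫ x in Set.Ioc 0 k, g x := by
    rw [setIntegral_indicator measurableSet_Ioc]
    congr 1
    rw [Set.inter_eq_self_of_subset_right (fun x hx => hx.1)]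
  rw [hindint] at hkey
  linarith

end GaussAux

lemma real_of_lintegral {w : ℝ → ℝ} {s : Set ℝ} {c : ℝ≥0∞} (hw : Measurable w)
    (hw0 : ∀ x, 0 ≤ w x) (hc : c ≠ ⊤) (h : (∫⁻ x in s, ENNReal.ofReal (w x)) = c) :
    IntegrableOn w s volume ∧ ∫ x in s, w x = c.toReal := by
  have hnn : ∀ᵐ x ∂(volume.restrict s), 0 ≤ w x := Filter.Eventually.of_forall hw0
  have hasm : AEStronglyMeasurable w (volume.restrict s) := hw.aestronglyMeasurable
  have hfin : HasFiniteIntegral w (volume.restrict s) := by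
    rw [hasFiniteIntegral_iff_norm]
    have : ∀ x, ENNReal.ofReal ‖w x‖ = ENNReal.ofReal (w x) := by
      intro x; rw [Real.norm_eq_abs, abs_of_nonneg (hw0 x)]
    calc ∫⁻ x in s, ENNReal.ofReal ‖w x‖
        = ∫⁻ x in s, ENNReal.ofReal (w x) := by
          exact lintegral_congr fun x => this x
      _ = c := h
      _ < ⊤ := lt_top_iff_ne_top.mpr hc
  refine ⟨⟨hasm, hfin⟩, ?_⟩
  rw [integral_eq_lintegral_of_nonneg_ae hnn hasm, h]

theorem sign_error_prob_gauss_inequality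
    {Ω : Type*} [MeasureSpace Ω] [IsProbabilityMeasure (ℙ : Measure Ω)]
    (X : Ω → ℝ) (μ σ S : ℝ) (hX : Integrable X ℙ) (hXm : Measurable X)
    (hX2 : Integrable (fun ω => (X ω - μ) ^ 2) ℙ)
    (hmean : ∫ ω, X ω ∂ℙ = μ) (hμ : μ ≠ 0) (hσ : 0 < σ)
    (hvar : ∫ ω, (X ω - μ) ^ 2 ∂ℙ ≤ σ ^ 2)
    (hunimodal : IsUnimodalWithMode (Measure.map X ℙ) μ)
    (hsymm : (Measure.map X ℙ).map (fun x => 2 * μ - x) = Measure.map X ℙ)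
    (hS : S = |μ| / σ) :
    ((2 / Real.sqrt 3 < S →
        (ℙ {ω | Real.sign (X ω) ≠ Real.sign μ}).toReal ≤ (2 / 9) * (1 / S ^ 2)) ∧
      (S ≤ 2 / Real.sqrt 3 →
        (ℙ {ω | Real.sign (X ω) ≠ Real.sign μ}).toReal ≤ 1 / 2 - S / (2 * Real.sqrt 3))) ∧
      (ℙ {ω | Real.sign (X ω) ≠ Real.sign μ}).toReal < 1 / 2 := by
  obtain ⟨ρ, hρ0, hρm, hνd, hmono, hanti⟩ := hunimodal
  set ν := Measure.map X ℙ with hν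
  haveI hνP : IsProbabilityMeasure ν := Measure.isProbabilityMeasure_map hXm.aemeasurable
  set k := |μ| with hkdef
  have hk0 : 0 < k := abs_pos.mpr hμ
  set g : ℝ → ℝ := fun y => ρ (μ + y) with hgdef
  have hgm : Measurable g := hρm.comp (measurable_const_add μ)
  have hg0 : ∀ y, 0 ≤ g y := fun y => hρ0 _
  have hga : AntitoneOn g (Set.Ici 0) := by
    intro x hx y hy hxy
    have hx' : (0:ℝ) ≤ x := hx
    exact hanti (Set.mem_Ici.mpr (by linarith)) (Set.mem_Ici.mpr (by linarith)) (by linarith)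
  -- basic measure facts
  have hfm : Measurable fun x : ℝ => 2 * μ - x := measurable_const.sub measurable_id
  have hsym_set : ∀ s : Set ℝ, MeasurableSet s → ν ((fun x => 2 * μ - x) ⁻¹' s) = ν s := by
    intro s hs
    conv_rhs => rw [← hsymm]
    rw [Measure.map_apply hfm hs]
  have hν_apply : ∀ s : Set ℝ, MeasurableSet s →
      ν s = ∫⁻ x in s, ENNReal.ofReal (ρ x) := by
    intro s hs
    rw [hνd, withDensity_apply _ hs]
  have hν_sing : ∀ c : ℝ, ν {c} = 0 := by
    intro c
    rw [hν_apply _ (measurableSet_singleton c)]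
    exact setLIntegral_measure_zero _ _ (Real.volume_singleton)
  have hIci_Ioi : ∀ c : ℝ, ν (Set.Ici c) = ν (Set.Ioi c) := by
    intro c
    have hset : Set.Ici c = Set.Ioi c ∪ {c} := by
      ext x
      simp only [Set.mem_Ici, Set.mem_union, Set.mem_Ioi, Set.mem_singleton_iff]
      constructor
      · intro h
        rcases eq_or_lt_of_le h with h | h
        · exact Or.inr h.symm
        · exact Or.inl h
      · rintro (h | h)
        · exact h.le
        · exact h.ge
    apply le_antisymm
    · calc ν (Set.Ici c) = ν (Set.Ioi c ∪ {c}) := by rw [hset]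
        _ ≤ ν (Set.Ioi c) + ν {c} := measure_union_le _ _
        _ = ν (Set.Ioi c) := by rw [hν_sing c, add_zero]
    · exact measure_mono Set.Ioi_subset_Ici_self
  -- translation machinery
  have htrans : ∀ (c : ℝ) (q : ℝ → ℝ≥0∞), Measurable q →
      (∫⁻ x in Set.Ioi c, q x ∂volume) = ∫⁻ y in Set.Ioi (c - μ), q (μ + y) ∂volume := by
    intro c q hq
    have hmp : MeasurePreserving (fun y : ℝ => μ + y) volume volume :=
      measurePreserving_add_left volume μ
    have hemb : MeasurableEmbedding (fun y : ℝ => μ + y) :=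
      (MeasurableEquiv.addLeft μ).measurableEmbedding
    have hpre : (fun y : ℝ => μ + y) ⁻¹' Set.Ioi c = Set.Ioi (c - μ) := by
      ext y; simp only [Set.mem_preimage, Set.mem_Ioi]; constructor <;> intro <;> linarith
    rw [← hpre]
    exact (hmp.setLIntegral_comp_preimage_emb hemb q (Set.Ioi c)).symm
  -- ν of Ioi sets as lintegrals of g
  have hνIoi : ∀ c : ℝ, ν (Set.Ioi c) = ∫⁻ y in Set.Ioi (c - μ), ENNReal.ofReal (g y) := by
    intro c
    rw [hν_apply _ measurableSet_Ioi,
      htrans c (fun x => ENNReal.ofReal (ρ x))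
        (by exact ENNReal.measurable_ofReal.comp hρm)]
  -- mass : ν (Ioi μ) = 1/2
  have hmass : ν (Set.Ioi μ) = 1 / 2 := by
    have h1 : ν (Set.Iio μ) = ν (Set.Ioi μ) := by
      have hpre : (fun x : ℝ => 2 * μ - x) ⁻¹' Set.Ioi μ = Set.Iio μ := by
        ext x; simp only [Set.mem_preimage, Set.mem_Ioi, Set.mem_Iio]
        constructor <;> intro <;> linarith
      rw [← hpre, hsym_set _ measurableSet_Ioi]
    have h2 : ν (Set.Ici μ) + ν (Set.Iio μ) = 1 := by
      rw [← Set.compl_Ici (a := μ)]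
      rw [measure_add_measure_compl measurableSet_Ici]
      exact measure_univ
    rw [hIci_Ioi, h1] at h2
    have h3 : (2 : ℝ≥0∞) * ν (Set.Ioi μ) = 1 := by rw [two_mul]; exact h2
    rw [ENNReal.eq_div_iff (by norm_num) (by norm_num)]
    exact h3
  -- second moment bound
  have hq2m : Measurable fun x : ℝ => ENNReal.ofReal ((x - μ) ^ 2) :=
    ENNReal.measurable_ofReal.comp ((measurable_id.sub measurable_const).pow_const 2)
  have hMtot : (∫⁻ x, ENNReal.ofReal ((x - μ) ^ 2) ∂ν) ≤ ENNReal.ofReal (σ ^ 2) := by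
    have h1 : (∫⁻ x, ENNReal.ofReal ((x - μ) ^ 2) ∂ν)
        = ∫⁻ ω, ENNReal.ofReal ((X ω - μ) ^ 2) ∂ℙ := lintegral_map hq2m hXm
    have h2 : ENNReal.ofReal (∫ ω, (X ω - μ) ^ 2 ∂ℙ)
        = ∫⁻ ω, ENNReal.ofReal ((X ω - μ) ^ 2) ∂ℙ :=
      ofReal_integral_eq_lintegral_ofReal hX2
        (Filter.Eventually.of_forall fun ω => sq_nonneg _)
    rw [h1, ← h2]
    exact ENNReal.ofReal_le_ofReal hvar
  have hhalfsym : (∫⁻ x in Set.Ioi μ, ENNReal.ofReal ((x - μ) ^ 2) ∂ν)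
      = ∫⁻ x in Set.Iio μ, ENNReal.ofReal ((x - μ) ^ 2) ∂ν := by
    have hind : Measurable ((Set.Ioi μ).indicator fun x => ENNReal.ofReal ((x - μ) ^ 2)) :=
      hq2m.indicator measurableSet_Ioi
    have h1 := lintegral_map hind hfm (μ := ν)
    rw [hsymm] at h1
    have h2 : (fun x => (Set.Ioi μ).indicator
          (fun x => ENNReal.ofReal ((x - μ) ^ 2)) (2 * μ - x))
        = (Set.Iio μ).indicator fun x => ENNReal.ofReal ((x - μ) ^ 2) := by
      ext x
      by_cases h : x < μ
      · rw [Set.indicator_of_mem (Set.mem_Ioi.mpr (by linarith)),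
          Set.indicator_of_mem (Set.mem_Iio.mpr h)]
        congr 1
        ring
      · rw [Set.indicator_of_notMem (fun hc => h (by simp only [Set.mem_Ioi] at hc; linarith)),
          Set.indicator_of_notMem (fun hc => h (Set.mem_Iio.mp hc))]
    rw [h2] at h1
    rw [lintegral_indicator measurableSet_Ioi, lintegral_indicator measurableSet_Iio] at h1
    exact h1
  have hmom_half : (∫⁻ x in Set.Ioi μ, ENNReal.ofReal ((x - μ) ^ 2) ∂ν)
      + (∫⁻ x in Set.Ioi μ, ENNReal.ofReal ((x - μ) ^ 2) ∂ν) ≤ ENNReal.ofReal (σ ^ 2) := by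
    nth_rewrite 1 [hhalfsym]
    have hdisj : Disjoint (Set.Iio μ) (Set.Ioi μ) :=
      (Set.Iio_disjoint_Ici le_rfl).mono_right Set.Ioi_subset_Ici_self
    rw [← lintegral_union measurableSet_Ioi hdisj]
    exact le_trans (setLIntegral_le_lintegral _ _) hMtot
  have hsetint : (∫⁻ x in Set.Ioi μ, ENNReal.ofReal ((x - μ) ^ 2) ∂ν)
      = ∫⁻ y in Set.Ioi 0, ENNReal.ofReal (y ^ 2 * g y) := by
    rw [hνd, restrict_withDensity measurableSet_Ioi,
      lintegral_withDensity_eq_lintegral_mul _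
        (by exact ENNReal.measurable_ofReal.comp hρm) hq2m]
    simp only [Pi.mul_apply]
    rw [htrans μ (fun x => ENNReal.ofReal (ρ x) * ENNReal.ofReal ((x - μ) ^ 2))
      ((ENNReal.measurable_ofReal.comp hρm).mul hq2m)]
    rw [sub_self]
    refine lintegral_congr fun y => ?_
    have h3 : μ + y - μ = y := by ring
    rw [h3, ENNReal.ofReal_mul (sq_nonneg y), mul_comm]
  rw [hsetint] at hmom_half
  -- real versions
  have hmassg := hνIoi μ
  rw [hmass, sub_self] at hmassg
  obtain ⟨hgi, hgint⟩ := real_of_lintegral hgm hg0 (by norm_num) hmassg.symm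
  have hgint' : (∫ y in Set.Ioi 0, g y) = 1 / 2 := by
    rw [hgint]; simp
  set M := ∫⁻ y in Set.Ioi 0, ENNReal.ofReal (y ^ 2 * g y) with hM
  have hMne : M ≠ ⊤ := by
    intro h
    rw [h] at hmom_half
    simp at hmom_half
  obtain ⟨hg2i, hg2int⟩ := real_of_lintegral
    (w := fun y => y ^ 2 * g y) ((measurable_id.pow_const 2).mul hgm)
    (fun y => mul_nonneg (sq_nonneg y) (hg0 y)) hMne rfl
  have hMle : (∫ y in Set.Ioi 0, y ^ 2 * g y) ≤ σ ^ 2 / 2 := by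
    rw [hg2int]
    have h2 : M.toReal + M.toReal ≤ σ ^ 2 := by
      have h3 := ENNReal.toReal_mono ENNReal.ofReal_ne_top hmom_half
      rwa [ENNReal.toReal_add hMne hMne, ENNReal.toReal_ofReal (by positivity)] at h3
    linarith
  -- tail
  have htail := hνIoi (μ + k)
  have hsub : μ + k - μ = k := by ring
  rw [hsub] at htail
  obtain ⟨htaili, htailint⟩ := real_of_lintegral hgm hg0
    (measure_ne_top ν _) htail.symm
  -- event identification
  have hevent : ℙ {ω | Real.sign (X ω) ≠ Real.sign μ} = ν (Set.Ioi (μ + k)) := by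
    rcases lt_or_gt_of_ne hμ with hneg | hpos
    · have hsgn : Real.sign μ = -1 := Real.sign_of_neg hneg
      have hset : {ω | Real.sign (X ω) ≠ Real.sign μ} = X ⁻¹' Set.Ici 0 := by
        ext ω
        simp only [Set.mem_setOf_eq, Set.mem_preimage, Set.mem_Ici, hsgn]
        constructor
        · intro h
          by_contra hc
          push_neg at hc
          exact h (Real.sign_of_neg hc)
        · intro h hc
          rcases eq_or_lt_of_le h with h' | h'
          · rw [← h', Real.sign_zero] at hc; norm_num at hc
          · rw [Real.sign_of_pos h'] at hc; norm_num at hc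
      have h0 : μ + k = 0 := by rw [hkdef, abs_of_neg hneg]; ring
      calc ℙ {ω | Real.sign (X ω) ≠ Real.sign μ} = ν (Set.Ici 0) := by
            rw [hset, hν, Measure.map_apply hXm measurableSet_Ici]
        _ = ν (Set.Ici (μ + k)) := by rw [h0]
        _ = ν (Set.Ioi (μ + k)) := hIci_Ioi _
    · have hsgn : Real.sign μ = 1 := Real.sign_of_pos hpos
      have hset : {ω | Real.sign (X ω) ≠ Real.sign μ} = X ⁻¹' Set.Iic 0 := by
        ext ω
        simp only [Set.mem_setOf_eq, Set.mem_preimage, Set.mem_Iic, hsgn]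
        constructor
        · intro h
          by_contra hc
          push_neg at hc
          exact h (Real.sign_of_pos hc)
        · intro h hc
          rcases eq_or_lt_of_le h with h' | h'
          · rw [h', Real.sign_zero] at hc; norm_num at hc
          · rw [Real.sign_of_neg h'] at hc; norm_num at hc
      have hμk : μ - k = 0 := by rw [hkdef, abs_of_pos hpos]; ring
      have hpre : (fun x : ℝ => 2 * μ - x) ⁻¹' Set.Iic (μ - k) = Set.Ici (μ + k) := by
        ext x
        simp only [Set.mem_preimage, Set.mem_Iic, Set.mem_Ici]
        constructor <;> intro <;> linarith
      calc ℙ {ω | Real.sign (X ω) ≠ Real.sign μ} = ν (Set.Iic 0) := by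
            rw [hset, hν, Measure.map_apply hXm measurableSet_Iic]
        _ = ν (Set.Iic (μ - k)) := by rw [hμk]
        _ = ν (Set.Ici (μ + k)) := by
            rw [← (hsym_set _ measurableSet_Iic : ν ((fun x => 2 * μ - x) ⁻¹' Set.Iic (μ - k)) = ν (Set.Iic (μ - k))), hpre]
        _ = ν (Set.Ioi (μ + k)) := hIci_Ioi _
  have hPto : (ℙ {ω | Real.sign (X ω) ≠ Real.sign μ}).toReal = ∫ y in Set.Ioi k, g y := by
    rw [hevent, htailint]
  set s3 := Real.sqrt 3 with hs3def
  have hs3 : 0 < s3 := Real.sqrt_pos.mpr (by norm_num)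
  have hs32 : s3 ^ 2 = 3 := Real.sq_sqrt (by norm_num)
  have hS0 : 0 < S := by rw [hS]; positivity
  have hbound1 : 2 / s3 < S → (∫ y in Set.Ioi k, g y) ≤ 2 / 9 * (1 / S ^ 2) := by
    intro _
    have h1 := gauss_one hk0 hgm hg0 hga hgi hg2i
    have h2 : 4 / (9 * k ^ 2) * (∫ x in Set.Ioi 0, x ^ 2 * g x)
        ≤ 4 / (9 * k ^ 2) * (σ ^ 2 / 2) :=
      mul_le_mul_of_nonneg_left hMle (by positivity)
    have h3 : 4 / (9 * k ^ 2) * (σ ^ 2 / 2) = 2 / 9 * (1 / S ^ 2) := by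
      rw [hS]
      field_simp
      ring
    linarith
  have hbound2 : S ≤ 2 / s3 → (∫ y in Set.Ioi k, g y) ≤ 1 / 2 - S / (2 * s3) := by
    intro hS2
    have hkσ : k ≤ 2 * σ / s3 := by
      rw [hS, div_le_div_iff₀ hσ hs3] at hS2
      rw [le_div_iff₀ hs3]
      linarith
    have h1 := gauss_two hk0 hσ hkσ hgm hg0 hga hgi hg2i
    have hsplit : (∫ y in Set.Ioi 0, g y)
        = (∫ y in Set.Ioc 0 k, g y) + ∫ y in Set.Ioi k, g y := by
      rw [← setIntegral_union (Set.Ioc_disjoint_Ioi le_rfl) measurableSet_Ioi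
        (hgi.mono_set Set.Ioc_subset_Ioi_self) (hgi.mono_set (Set.Ioi_subset_Ioi hk0.le)),
        Set.Ioc_union_Ioi_eq_Ioi hk0.le]
    have hMr0 : (0:ℝ) ≤ ∫ x in Set.Ioi 0, x ^ 2 * g x :=
      setIntegral_nonneg measurableSet_Ioi fun x _ => mul_nonneg (sq_nonneg x) (hg0 x)
    have hβ0 : (0:ℝ) ≤ 3 * (s3 * k / (18 * σ ^ 3)) := by positivity
    have h4 : s3 * k / (2 * σ) * (1 / 2) - 3 * (s3 * k / (18 * σ ^ 3)) * (σ ^ 2 / 2)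
        ≤ ∫ y in Set.Ioc 0 k, g y := by
      have h5 : 3 * (s3 * k / (18 * σ ^ 3)) * (∫ x in Set.Ioi 0, x ^ 2 * g x)
          ≤ 3 * (s3 * k / (18 * σ ^ 3)) * (σ ^ 2 / 2) :=
        mul_le_mul_of_nonneg_left hMle (by positivity)
      rw [hgint'] at h1
      linarith
    have h6 : s3 * k / (2 * σ) * (1 / 2) - 3 * (s3 * k / (18 * σ ^ 3)) * (σ ^ 2 / 2)
        = S / (2 * s3) := by
      rw [hS]
      have h1 : s3 ≠ 0 := hs3.ne'
      have h2 : σ ≠ 0 := hσ.ne'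
      field_simp
      linear_combination 12 * hs32
    rw [hgint'] at hsplit
    linarith
  constructor
  · constructor
    · intro h
      rw [hPto]
      exact hbound1 h
    · intro h
      rw [hPto]
      exact hbound2 h
  · rw [hPto]
    by_cases hc : S ≤ 2 / s3
    · have := hbound2 hc
      have hpos : 0 < S / (2 * s3) := by positivity
      linarith
    · push_neg at hc
      have h1 := hbound1 hc
      have h2 : (2 / s3) ^ 2 < S ^ 2 := by
        apply pow_lt_pow_left₀ hc (by positivity)
        norm_num
      have h3 : (2 / s3) ^ 2 = 4 / 3 := by
        rw [div_pow, hs32]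
        norm_num
      have h4 : 1 / S ^ 2 < 3 / 4 := by
        rw [div_lt_div_iff₀ (by positivity) (by norm_num)]
        rw [h3] at h2
        linarith
      have h5 : 2 / 9 * (1 / S ^ 2) < 2 / 9 * (3 / 4) :=
        mul_lt_mul_of_pos_left h4 (by norm_num)
      linarith
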